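/- In one dimension, the generator L acting on smooth functions f of x by (Lf)(x) = −(1/τ)(x²+x)f'(x) + ((A+2B)/2)f''(x), with τ > 0 and A+2B > 0, annihilates in the adjoint sense the density η(x) = Z^{-1} e^{−(2x³/3 + x²)/(τ(A+2B))} ∫_{−∞}^x e^{(2x'³/3 + x'²)/(τ(A+2B))} dx'; i.e. (L†η)(x) = (1/τ)d/dx[(x²+x)η(x)] + ((A+2B)/2)η''(x) = 0 for all x ∈ ℝ. -/

import Mathlib

open MeasureTheory

/-- The invariant density `η(x)` of the projectivized 1d dispersion,
up to the normalization constant `Z`. -/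
noncomputable def invDensity (c Z : ℝ) (x : ℝ) : ℝ :=
  Z⁻¹ * Real.exp (-(2 * x ^ 3 / 3 + x ^ 2) / c) *
    ∫ t in Set.Iic x, Real.exp ((2 * t ^ 3 / 3 + t ^ 2) / c)

lemma contG (c : ℝ) : Continuous fun t : ℝ => Real.exp ((2 * t ^ 3 / 3 + t ^ 2) / c) := by
  fun_prop

lemma intG (c : ℝ) (hc : 0 < c) (x : ℝ) :
    IntegrableOn (fun t : ℝ => Real.exp ((2 * t ^ 3 / 3 + t ^ 2) / c)) (Set.Iic x) := by
  set M := min (-3 : ℝ) (-c) with hM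
  have h1 : IntegrableOn (fun t : ℝ => Real.exp ((2 * t ^ 3 / 3 + t ^ 2) / c))
      (Set.Iic M) := by
    apply MeasureTheory.Integrable.mono (integrableOn_exp_Iic M)
      (contG c).aestronglyMeasurable.restrict
    filter_upwards [MeasureTheory.ae_restrict_mem measurableSet_Iic] with t ht
    rw [Real.norm_eq_abs, Real.norm_eq_abs, abs_of_pos (Real.exp_pos _),
      abs_of_pos (Real.exp_pos _), Real.exp_le_exp, div_le_iff₀ hc]
    have ht3 : t ≤ -3 := le_trans ht (min_le_left _ _)
    have htc : t ≤ -c := le_trans ht (min_le_right _ _)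
    have hA : 2 * t ^ 2 * (t + 3) ≤ 0 := by nlinarith [sq_nonneg t]
    have hB : (0 : ℝ) ≤ t * (t + c) := by nlinarith
    nlinarith
  have h2 : IntegrableOn (fun t : ℝ => Real.exp ((2 * t ^ 3 / 3 + t ^ 2) / c))
      (Set.Icc M x) := (contG c).integrableOn_Icc
  refine (h1.union h2).mono_set ?_
  intro t ht
  rcases le_or_gt t M with h | h
  · exact Or.inl h
  · exact Or.inr ⟨h.le, ht⟩

lemma hasDerivAt_F (c : ℝ) (hc : 0 < c) (x : ℝ) :
    HasDerivAt (fun y : ℝ => ∫ t in Set.Iic y, Real.exp ((2 * t ^ 3 / 3 + t ^ 2) / c))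
      (Real.exp ((2 * x ^ 3 / 3 + x ^ 2) / c)) x := by
  set g := fun t : ℝ => Real.exp ((2 * t ^ 3 / 3 + t ^ 2) / c) with hg
  have key : ∀ y : ℝ, (∫ t in Set.Iic y, g t)
      = (∫ t in Set.Iic (0 : ℝ), g t) + ∫ t in (0 : ℝ)..y, g t := by
    intro y
    have := intervalIntegral.integral_Iic_sub_Iic (intG c hc 0) (intG c hc y)
    linarith
  have hd : HasDerivAt (fun y : ℝ => (∫ t in Set.Iic (0 : ℝ), g t) + ∫ t in (0 : ℝ)..y, g t)
      (g x) x := by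
    refine HasDerivAt.const_add _ ?_
    exact intervalIntegral.integral_hasDerivAt_right
      ((contG c).intervalIntegrable 0 x)
      ((contG c).stronglyMeasurableAtFilter _ _)
      (contG c).continuousAt
  exact (Filter.EventuallyEq.hasDerivAt_iff
    (Filter.Eventually.of_forall key)).mpr hd

lemma hasDerivAt_eta (c Z : ℝ) (hc : 0 < c) (x : ℝ) :
    HasDerivAt (invDensity c Z)
      (-(2 * (x ^ 2 + x)) / c * invDensity c Z x + Z⁻¹) x := by
  have hF := hasDerivAt_F c hc x
  have hpoly : HasDerivAt (fun y : ℝ => 2 * y ^ 3 / 3 + y ^ 2)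
      (2 * x ^ 2 + 2 * x) x := by
    have h1 := ((hasDerivAt_pow 3 x).const_mul (2 : ℝ)).div_const 3
    have h2 := hasDerivAt_pow 2 x
    refine (h1.add h2).congr_deriv ?_
    push_cast
    ring
  have hφ : HasDerivAt (fun y : ℝ => -(2 * y ^ 3 / 3 + y ^ 2) / c)
      (-(2 * x ^ 2 + 2 * x) / c) x := hpoly.neg.div_const c
  have hu : HasDerivAt (fun y : ℝ => Z⁻¹ * Real.exp (-(2 * y ^ 3 / 3 + y ^ 2) / c))
      (Z⁻¹ * (Real.exp (-(2 * x ^ 3 / 3 + x ^ 2) / c) * (-(2 * x ^ 2 + 2 * x) / c))) x :=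
    (hφ.exp).const_mul Z⁻¹
  have hmul := hu.mul hF
  have hexp : Real.exp (-(2 * x ^ 3 / 3 + x ^ 2) / c) *
      Real.exp ((2 * x ^ 3 / 3 + x ^ 2) / c) = 1 := by
    rw [← Real.exp_add]
    ring_nf
    exact Real.exp_zero
  refine hmul.congr_deriv ?_
  symm
  unfold invDensity
  linear_combination (-Z⁻¹ : ℝ) * hexp

/-- `η` solves the stationary Fokker–Planck equation
`L†η = (1/τ) d/dx[(x²+x)η] + ((A+2B)/2) η'' = 0`. -/
theorem stationary_fokker_planck (τ A B Z : ℝ) (hτ : 0 < τ)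
    (hAB : 0 < A + 2 * B) (hZ : 0 < Z) (c : ℝ) (hc : c = τ * (A + 2 * B)) :
    ∀ x : ℝ,
      (1 / τ) * deriv (fun x' => (x' ^ 2 + x') * invDensity c Z x') x
        + (A + 2 * B) / 2 * deriv (deriv (invDensity c Z)) x = 0 := by
  have hc0 : 0 < c := by rw [hc]; positivity
  intro x
  set η := invDensity c Z with hη
  have hD : ∀ y : ℝ, HasDerivAt η (-(2 * (y ^ 2 + y)) / c * η y + Z⁻¹) y :=
    fun y => hasDerivAt_eta c Z hc0 y
  have hderiv : deriv η = fun y => -(2 * (y ^ 2 + y)) / c * η y + Z⁻¹ :=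
    funext fun y => (hD y).deriv
  have hq : HasDerivAt (fun y : ℝ => y ^ 2 + y) (2 * x + 1) x := by
    have := (hasDerivAt_pow 2 x).add (hasDerivAt_id x)
    refine this.congr_deriv ?_
    push_cast
    ring
  have h1 : deriv (fun x' => (x' ^ 2 + x') * η x') x
      = (2 * x + 1) * η x + (x ^ 2 + x) * (-(2 * (x ^ 2 + x)) / c * η x + Z⁻¹) :=
    (hq.mul (hD x)).deriv
  have hcoef : HasDerivAt (fun y : ℝ => -(2 * (y ^ 2 + y)) / c)
      (-(2 * (2 * x + 1)) / c) x := (hq.const_mul 2).neg.div_const c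
  have h2 : deriv (deriv η) x
      = (-(2 * (2 * x + 1)) / c) * η x
        + (-(2 * (x ^ 2 + x)) / c) * (-(2 * (x ^ 2 + x)) / c * η x + Z⁻¹) := by
    rw [hderiv]
    exact ((hcoef.mul (hD x)).add_const Z⁻¹).deriv
  rw [h1, h2, hc]
  have hτ' : τ ≠ 0 := ne_of_gt hτ
  have hAB' : A + 2 * B ≠ 0 := ne_of_gt hAB
  field_simp
  ring
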